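/- Let M=(S,A,P) be an RMDP and T ⊆ S a target set. For every state s ∈ S: s ∈ PAttr_A(M,T) if and only if there exists a pure memoryless agent policy σ such that for all environment policies ρ we have ℙ^{σ,ρ}_M(s)[Reach(T)] > 0. -/

import Mathlib

open scoped BigOperators Classical

/-- A robust MDP over finite state set `S` and finite action set `A`.
Distributions are represented as real-valued probability vectors `S → ℝ`. -/
structure RMDP (S A : Type) [Fintype S] [Fintype A] where
  /-- available actions at each state -/
  Act : S → Finset A
  Act_nonempty : ∀ s, (Act s).Nonempty
  /-- the uncertainty sets -/
  P : S → A → Set (S → ℝ)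
  P_prob : ∀ s, ∀ a ∈ Act s, ∀ p ∈ P s a, (∀ t, 0 ≤ p t) ∧ ∑ t, p t = 1
  P_nonempty : ∀ s, ∀ a ∈ Act s, (P s a).Nonempty
  P_compact : ∀ s, ∀ a ∈ Act s, IsCompact (P s a)

variable {S A : Type} [Fintype S] [Nonempty S] [Fintype A]

/-- An agent policy: given a history and the current state, a probability
distribution over the available actions. -/
structure AgentPolicy (M : RMDP S A) where
  toFun : List (S × A) → S → A → ℝ
  nonneg : ∀ h s a, 0 ≤ toFun h s a
  sum_one : ∀ h s, ∑ a, toFun h s a = 1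
  mem_act : ∀ h s a, toFun h s a ≠ 0 → a ∈ M.Act s

/-- An environment policy: given a history, the current state and the chosen
action, a distribution from the uncertainty set. -/
structure EnvPolicy (M : RMDP S A) where
  toFun : List (S × A) → S → A → S → ℝ
  mem : ∀ h s, ∀ a ∈ M.Act s, toFun h s a ∈ M.P s a

/-- A pure memoryless agent policy deterministically picks an action
depending only on the current state. -/
def AgentPolicy.PureMemoryless {M : RMDP S A} (σ : AgentPolicy M) : Prop :=
  ∃ f : S → A, ∀ h s a, σ.toFun h s a = if a = f s then 1 else 0

/-- A pure memoryless environment policy picks the transition distribution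
depending only on the current state and action. -/
def EnvPolicy.PureMemoryless {M : RMDP S A} (ρ : EnvPolicy M) : Prop :=
  ∃ g : S → A → S → ℝ, ∀ h s a, ρ.toFun h s a = g s a

/-- Probability, under policies `σ, ρ`, of reaching the target `T` within `k`
steps, starting from state `s` with history `h`. -/
noncomputable def reachK (M : RMDP S A) (σ : AgentPolicy M) (ρ : EnvPolicy M) (T : Set S) :
    ℕ → List (S × A) → S → ℝ
  | 0, _, s => if s ∈ T then 1 else 0
  | k + 1, h, s =>
      if s ∈ T then 1
      else ∑ a, σ.toFun h s a * ∑ t, ρ.toFun h s a t * reachK M σ ρ T k (h ++ [(s, a)]) t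

/-- `ℙ^{σ,ρ}_M(s)[Reach(T)]`: the probability of eventually reaching `T`,
which is the supremum over `k` of the probabilities of reaching `T` within `k` steps. -/
noncomputable def reachProb (M : RMDP S A) (σ : AgentPolicy M) (ρ : EnvPolicy M)
    (T : Set S) (s : S) : ℝ :=
  ⨆ k : ℕ, reachK M σ ρ T k [] s

/-- `Val^{s,σ}_M(Reach(T)) = inf_ρ ℙ^{σ,ρ}_M(s)[Reach(T)]`. -/
noncomputable def reachVal (M : RMDP S A) (σ : AgentPolicy M) (T : Set S) (s : S) : ℝ :=
  ⨅ ρ : EnvPolicy M, reachProb M σ ρ T s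

/-- `Val^{s}_M(Reach(T)) = sup_σ inf_ρ ℙ^{σ,ρ}_M(s)[Reach(T)]`. -/
noncomputable def reachValSup (M : RMDP S A) (T : Set S) (s : S) : ℝ :=
  ⨆ σ : AgentPolicy M, reachVal M σ T s

/-- `force_A(s,B)`: the agent has an action that reaches `B` with positive
probability no matter which distribution the environment picks. -/
def forceA (M : RMDP S A) (s : S) (B : Set S) : Prop :=
  ∃ a ∈ M.Act s, ∀ p ∈ M.P s a, 0 < ∑ t, B.indicator p t

/-- `force_E(s,B)`: whatever action the agent picks, the environment can pick a
distribution reaching `B` with positive probability. -/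
def forceE (M : RMDP S A) (s : S) (B : Set S) : Prop :=
  ∀ a ∈ M.Act s, ∃ p ∈ M.P s a, 0 < ∑ t, B.indicator p t

/-- The increasing sequence `T₀ = T`, `T_{i+1} = T_i ∪ {s | force_A(s, T_i)}`. -/
def attrSeqA (M : RMDP S A) (T : Set S) : ℕ → Set S
  | 0 => T
  | i + 1 => attrSeqA M T i ∪ {s | forceA M s (attrSeqA M T i)}

/-- The positive attractor of the agent. -/
def PAttrA (M : RMDP S A) (T : Set S) : Set S := ⋃ i, attrSeqA M T i

/-- The increasing sequence `T₀ = T`, `T_{i+1} = T_i ∪ {s | force_E(s, T_i)}`. -/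
def attrSeqE (M : RMDP S A) (T : Set S) : ℕ → Set S
  | 0 => T
  | i + 1 => attrSeqE M T i ∪ {s | forceE M s (attrSeqE M T i)}

/-- The positive attractor of the environment. -/
def PAttrE (M : RMDP S A) (T : Set S) : Set S := ⋃ i, attrSeqE M T i


/-! ### Auxiliary lemmas -/

section Aux

lemma attrSeqA_mono (M : RMDP S A) (T : Set S) : Monotone (attrSeqA M T) :=
  monotone_nat_of_le_succ fun _ => Set.subset_union_left

lemma reachK_nonneg (M : RMDP S A) (σ : AgentPolicy M) (ρ : EnvPolicy M) (T : Set S) :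
    ∀ k h s, 0 ≤ reachK M σ ρ T k h s := by
  intro k
  induction k with
  | zero => intro h s; rw [reachK]; split <;> norm_num
  | succ k ih =>
    intro h s
    rw [reachK]
    split
    · norm_num
    · refine Finset.sum_nonneg fun a _ => ?_
      rcases eq_or_ne (σ.toFun h s a) 0 with h0 | h0
      · simp [h0]
      · have ha := σ.mem_act h s a h0
        have hp := M.P_prob s a ha _ (ρ.mem h s a ha)
        exact mul_nonneg (σ.nonneg h s a)
          (Finset.sum_nonneg fun t _ => mul_nonneg (hp.1 t) (ih _ t))

lemma reachK_le_one (M : RMDP S A) (σ : AgentPolicy M) (ρ : EnvPolicy M) (T : Set S) :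
    ∀ k h s, reachK M σ ρ T k h s ≤ 1 := by
  intro k
  induction k with
  | zero => intro h s; rw [reachK]; split <;> norm_num
  | succ k ih =>
    intro h s
    rw [reachK]
    split
    · exact le_refl 1
    · calc ∑ a, σ.toFun h s a * ∑ t, ρ.toFun h s a t * reachK M σ ρ T k (h ++ [(s, a)]) t
          ≤ ∑ a, σ.toFun h s a := by
            refine Finset.sum_le_sum fun a _ => ?_
            rcases eq_or_ne (σ.toFun h s a) 0 with h0 | h0
            · simp [h0]
            · have ha := σ.mem_act h s a h0
              have hp := M.P_prob s a ha _ (ρ.mem h s a ha)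
              have hin : ∑ t, ρ.toFun h s a t * reachK M σ ρ T k (h ++ [(s, a)]) t ≤ 1 := by
                calc ∑ t, ρ.toFun h s a t * reachK M σ ρ T k (h ++ [(s, a)]) t
                    ≤ ∑ t, ρ.toFun h s a t :=
                      Finset.sum_le_sum fun t _ => by
                        nlinarith [hp.1 t, ih (h ++ [(s, a)]) t,
                          reachK_nonneg M σ ρ T k (h ++ [(s, a)]) t]
                  _ = 1 := hp.2
              nlinarith [σ.nonneg h s a]
        _ = 1 := σ.sum_one h s

lemma reachK_mono (M : RMDP S A) (σ : AgentPolicy M) (ρ : EnvPolicy M) (T : Set S) :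
    ∀ k h s, reachK M σ ρ T k h s ≤ reachK M σ ρ T (k + 1) h s := by
  intro k
  induction k with
  | zero =>
    intro h s
    by_cases hT : s ∈ T
    · have h1 : reachK M σ ρ T 0 h s = 1 := by rw [reachK, if_pos hT]
      have h2 : reachK M σ ρ T (0+1) h s = 1 := by rw [reachK, if_pos hT]
      rw [h1, h2]
    · have h1 : reachK M σ ρ T 0 h s = 0 := by rw [reachK, if_neg hT]
      rw [h1]
      exact reachK_nonneg M σ ρ T (0+1) h s
  | succ k ih =>
    intro h s
    by_cases hT : s ∈ T
    · have h1 : reachK M σ ρ T (k+1) h s = 1 := by rw [reachK, if_pos hT]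
      have h2 : reachK M σ ρ T (k+1+1) h s = 1 := by rw [reachK, if_pos hT]
      rw [h1, h2]
    · rw [reachK, if_neg hT]
      conv_rhs => rw [reachK]
      rw [if_neg hT]
      refine Finset.sum_le_sum fun a _ => ?_
      rcases eq_or_ne (σ.toFun h s a) 0 with h0 | h0
      · simp [h0]
      · have ha := σ.mem_act h s a h0
        have hp := M.P_prob s a ha _ (ρ.mem h s a ha)
        refine mul_le_mul_of_nonneg_left ?_ (σ.nonneg h s a)
        exact Finset.sum_le_sum fun t _ =>
          mul_le_mul_of_nonneg_left (ih _ t) (hp.1 t)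

/-- The rank of a state in the attractor sequence. -/
noncomputable def rankIdx (M : RMDP S A) (T : Set S) (t : S) : ℕ :=
  if h : t ∈ PAttrA M T then Nat.find (Set.mem_iUnion.mp h) else 0

lemma mem_attrSeqA_rankIdx (M : RMDP S A) (T : Set S) (t : S) (h : t ∈ PAttrA M T) :
    t ∈ attrSeqA M T (rankIdx M T t) := by
  rw [rankIdx, dif_pos h]
  exact Nat.find_spec (Set.mem_iUnion.mp h)

lemma rankIdx_le (M : RMDP S A) (T : Set S) (t : S) (i : ℕ) (hi : t ∈ attrSeqA M T i) :
    rankIdx M T t ≤ i := by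
  have h : t ∈ PAttrA M T := Set.mem_iUnion.mpr ⟨i, hi⟩
  rw [rankIdx, dif_pos h]
  exact Nat.find_le hi

lemma force_at_rankIdx (M : RMDP S A) (T : Set S) (t : S) (h : t ∈ PAttrA M T) (hT : t ∉ T) :
    forceA M t (attrSeqA M T (rankIdx M T t - 1)) := by
  have hmem := mem_attrSeqA_rankIdx M T t h
  have hpos : 0 < rankIdx M T t := by
    rcases Nat.eq_zero_or_pos (rankIdx M T t) with h0 | h0
    · rw [h0] at hmem; exact absurd hmem hT
    · exact h0
  have hlt : t ∉ attrSeqA M T (rankIdx M T t - 1) := by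
    rw [rankIdx, dif_pos h] at hpos ⊢
    exact Nat.find_min (Set.mem_iUnion.mp h) (Nat.sub_lt hpos one_pos)
  obtain ⟨m, hm⟩ := Nat.exists_eq_add_of_lt hpos
  have hm' : rankIdx M T t = (rankIdx M T t - 1) + 1 := by omega
  rw [hm'] at hmem
  rcases hmem with hmem | hmem
  · exact absurd hmem hlt
  · exact hmem

/-- The pure memoryless choice of action. -/
noncomputable def goodAct (M : RMDP S A) (T : Set S) (t : S) : A :=
  if h : forceA M t (attrSeqA M T (rankIdx M T t - 1)) then h.choose
  else (M.Act_nonempty t).choose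

lemma goodAct_mem (M : RMDP S A) (T : Set S) (t : S) : goodAct M T t ∈ M.Act t := by
  rw [goodAct]
  split
  · next h => exact h.choose_spec.1
  · exact (M.Act_nonempty t).choose_spec

lemma goodAct_spec (M : RMDP S A) (T : Set S) (t : S) (h : t ∈ PAttrA M T) (hT : t ∉ T) :
    ∀ p ∈ M.P t (goodAct M T t),
      0 < ∑ u, (attrSeqA M T (rankIdx M T t - 1)).indicator p u := by
  have hf := force_at_rankIdx M T t h hT
  rw [goodAct, dif_pos hf]
  exact hf.choose_spec.2

/-- The dirac agent policy induced by a selection of actions. -/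
noncomputable def diracPolicy (M : RMDP S A) (f : S → A) (hf : ∀ s, f s ∈ M.Act s) :
    AgentPolicy M where
  toFun := fun _ s a => if a = f s then 1 else 0
  nonneg := fun _ _ _ => by split <;> norm_num
  sum_one := fun _ s => by simp [Finset.sum_ite_eq']
  mem_act := fun _ s a ha => by
    by_cases hfa : a = f s
    · rw [hfa]; exact hf s
    · simp [hfa] at ha

end Aux

section Aux2

lemma attrSeqA_stab (M : RMDP S A) (T : Set S) :
    ∃ n, PAttrA M T = attrSeqA M T n := by
  have h1 : ∃ n, attrSeqA M T (n + 1) = attrSeqA M T n := by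
    by_contra hc
    push_neg at hc
    have hss : StrictMono fun n => (attrSeqA M T n).ncard := by
      apply strictMono_nat_of_lt_succ
      intro n
      exact Set.ncard_lt_ncard
        (HasSubset.Subset.ssubset_of_ne Set.subset_union_left (Ne.symm (hc n)))
        (Set.toFinite _)
    have h2 := hss.le_apply (x := Fintype.card S + 1)
    have h3 : (attrSeqA M T (Fintype.card S + 1)).ncard ≤ Fintype.card S := by
      have := Set.ncard_le_ncard (Set.subset_univ (attrSeqA M T (Fintype.card S + 1)))
        (Set.toFinite _)
      simpa [Set.ncard_univ] using this
    omega
  obtain ⟨n, hn⟩ := h1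
  have hstab : ∀ m, n ≤ m → attrSeqA M T m = attrSeqA M T n := by
    intro m hm
    induction m with
    | zero =>
      have h0 : n = 0 := Nat.le_zero.mp hm
      rw [h0]
    | succ m ih =>
      rcases Nat.lt_or_ge n (m + 1) with h | h
      · have hmn : n ≤ m := by omega
        have := ih hmn
        show attrSeqA M T m ∪ {s | forceA M s (attrSeqA M T m)} = attrSeqA M T n
        rw [this]
        exact hn
      · have : m + 1 = n := by omega
        rw [this]
  refine ⟨n, le_antisymm ?_ (Set.subset_iUnion _ n)⟩
  refine Set.iUnion_subset fun i => ?_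
  rcases Nat.lt_or_ge i n with h | h
  · exact attrSeqA_mono M T h.le
  · rw [hstab i h]

lemma not_forceA_top (M : RMDP S A) (T : Set S) (n : ℕ)
    (hW : PAttrA M T = attrSeqA M T n) (t : S) (ht : t ∉ PAttrA M T) :
    ¬ forceA M t (PAttrA M T) := by
  intro hf
  apply ht
  rw [hW] at hf ⊢
  have : t ∈ attrSeqA M T (n + 1) := Or.inr hf
  rw [← hW]
  exact Set.mem_iUnion.mpr ⟨n + 1, this⟩

end Aux2

@[simp] lemma diracPolicy_toFun (M : RMDP S A) (f : S → A) (hf : ∀ s, f s ∈ M.Act s)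
    (h : List (S × A)) (s : S) (a : A) :
    (diracPolicy M f hf).toFun h s a = if a = f s then 1 else 0 := rfl

theorem stmt0 (M : RMDP S A) (T : Set S) (s : S) :
    s ∈ PAttrA M T ↔
      ∃ σ : AgentPolicy M, σ.PureMemoryless ∧
        ∀ ρ : EnvPolicy M, 0 < reachProb M σ ρ T s := by
  constructor
  · intro hs
    refine ⟨diracPolicy M (goodAct M T) (goodAct_mem M T),
      ⟨goodAct M T, fun h s a => rfl⟩, ?_⟩
    set σ := diracPolicy M (goodAct M T) (goodAct_mem M T) with hσ
    intro ρ
    have key : ∀ i h t, t ∈ attrSeqA M T i → 0 < reachK M σ ρ T i h t := by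
      intro i
      induction i with
      | zero =>
        intro h t ht
        rw [reachK, if_pos (show t ∈ T from ht)]
        norm_num
      | succ i ih =>
        intro h t ht
        by_cases hT : t ∈ T
        · rw [reachK, if_pos hT]; norm_num
        · rcases ht with ht | ht
          · calc (0:ℝ) < reachK M σ ρ T i h t := ih h t ht
              _ ≤ reachK M σ ρ T (i+1) h t := reachK_mono M σ ρ T i h t
          · have htP : t ∈ PAttrA M T := Set.mem_iUnion.mpr ⟨i + 1, Or.inr ht⟩
            have hrk : rankIdx M T t - 1 ≤ i := by
              have := rankIdx_le M T t (i+1) (Or.inr ht); omega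
            have ha : goodAct M T t ∈ M.Act t := goodAct_mem M T t
            have hpmem := ρ.mem h t (goodAct M T t) ha
            have hspec := goodAct_spec M T t htP hT _ hpmem
            obtain ⟨u, -, hu⟩ := Finset.exists_ne_zero_of_sum_ne_zero hspec.ne'
            have hu' : u ∈ attrSeqA M T (rankIdx M T t - 1) ∧
                ρ.toFun h t (goodAct M T t) u ≠ 0 := by
              by_cases hmem : u ∈ attrSeqA M T (rankIdx M T t - 1)
              · exact ⟨hmem, by rwa [Set.indicator_of_mem hmem] at hu⟩
              · rw [Set.indicator_of_notMem hmem] at hu; exact absurd rfl hu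
            have hprob := M.P_prob t (goodAct M T t) ha _ hpmem
            have hpu : 0 < ρ.toFun h t (goodAct M T t) u :=
              lt_of_le_of_ne (hprob.1 u) (Ne.symm hu'.2)
            have hui : u ∈ attrSeqA M T i := attrSeqA_mono M T hrk hu'.1
            have hreach := ih (h ++ [(t, goodAct M T t)]) u hui
            rw [reachK, if_neg hT]
            have hsum : ∑ a, σ.toFun h t a *
                  ∑ v, ρ.toFun h t a v * reachK M σ ρ T i (h ++ [(t, a)]) v
                = ∑ v, ρ.toFun h t (goodAct M T t) v *
                    reachK M σ ρ T i (h ++ [(t, goodAct M T t)]) v := by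
              rw [hσ]
              simp only [diracPolicy_toFun, ite_mul, one_mul, zero_mul]
              rw [Finset.sum_ite_eq' Finset.univ (goodAct M T t)]
              simp
            rw [hsum]
            exact Finset.sum_pos'
              (fun v _ => mul_nonneg (hprob.1 v) (reachK_nonneg M σ ρ T i _ v))
              ⟨u, Finset.mem_univ u, mul_pos hpu hreach⟩
    obtain ⟨i, hi⟩ := Set.mem_iUnion.mp hs
    have h1 := key i [] s hi
    have hb : BddAbove (Set.range fun k => reachK M σ ρ T k [] s) := by
      refine ⟨1, ?_⟩
      rintro x ⟨k, rfl⟩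
      exact reachK_le_one M σ ρ T k [] s
    exact lt_of_lt_of_le h1 (le_ciSup hb i)
  · rintro ⟨σ, -, hσ⟩
    by_contra hs
    obtain ⟨n, hW⟩ := attrSeqA_stab M T
    have key : ∀ t, t ∉ PAttrA M T → ∀ a ∈ M.Act t,
        ∃ p ∈ M.P t a, ∀ u ∈ PAttrA M T, p u = 0 := by
      intro t ht a haMem
      have hnf := not_forceA_top M T n hW t ht
      rw [forceA] at hnf
      push_neg at hnf
      obtain ⟨p, hp, hple⟩ := hnf a haMem
      refine ⟨p, hp, ?_⟩
      have hprob := M.P_prob t a haMem p hp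
      have hzero : ∑ u, (PAttrA M T).indicator p u = 0 :=
        le_antisymm hple (Finset.sum_nonneg fun u _ =>
          Set.indicator_nonneg (fun v _ => hprob.1 v) u)
      intro u hu
      have := (Finset.sum_eq_zero_iff_of_nonneg (fun v _ =>
        Set.indicator_nonneg (fun w _ => hprob.1 w) v)).mp hzero u (Finset.mem_univ u)
      rwa [Set.indicator_of_mem hu] at this
    let g : S → A → S → ℝ := fun t a =>
      if h : a ∈ M.Act t then
        if ht : t ∈ PAttrA M T then (M.P_nonempty t a h).choose
        else (key t ht a h).choose
      else fun _ => 0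
    have hg_mem : ∀ t a, a ∈ M.Act t → g t a ∈ M.P t a := by
      intro t a h
      simp only [g, dif_pos h]
      split
      · exact (M.P_nonempty t a h).choose_spec
      · next ht => exact (key t ht a h).choose_spec.1
    have hg_zero : ∀ t, t ∉ PAttrA M T → ∀ a, a ∈ M.Act t →
        ∀ u ∈ PAttrA M T, g t a u = 0 := by
      intro t ht a h u hu
      simp only [g, dif_pos h, dif_neg ht]
      exact (key t ht a h).choose_spec.2 u hu
    let ρ : EnvPolicy M := ⟨fun _ t a => g t a, fun h t a ha => hg_mem t a ha⟩
    have hTsub : T ⊆ PAttrA M T := Set.subset_iUnion (attrSeqA M T) 0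
    have hzero : ∀ k h t, t ∉ PAttrA M T → reachK M σ ρ T k h t = 0 := by
      intro k
      induction k with
      | zero => intro h t ht; rw [reachK, if_neg (fun hT => ht (hTsub hT))]
      | succ k ih =>
        intro h t ht
        rw [reachK, if_neg (fun hT => ht (hTsub hT))]
        refine Finset.sum_eq_zero fun a _ => ?_
        rcases eq_or_ne (σ.toFun h t a) 0 with h0 | h0
        · rw [h0, zero_mul]
        · have ha := σ.mem_act h t a h0
          have hin : ∑ v, ρ.toFun h t a v * reachK M σ ρ T k (h ++ [(t, a)]) v = 0 := by
            refine Finset.sum_eq_zero fun v _ => ?_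
            by_cases hv : v ∈ PAttrA M T
            · have : ρ.toFun h t a v = 0 := hg_zero t ht a ha v hv
              rw [this, zero_mul]
            · rw [ih _ v hv, mul_zero]
          rw [hin, mul_zero]
    have hp0 : reachProb M σ ρ T s = 0 := by
      rw [reachProb]
      have heq : (fun k => reachK M σ ρ T k [] s) = fun _ => (0:ℝ) :=
        funext fun k => hzero k [] s hs
      rw [heq]
      exact ciSup_const
    have := hσ ρ
    rw [hp0] at this
    exact lt_irrefl 0 this
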